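/- arXiv:solv-int/9808016 — 3 statements merged into one kernel-verified Lean document; each statement's English description precedes it below -/
import Mathlib

section
/- Let f(x) = μ/x, g(y) = ν/y, h(z) = λ/z with λ + μ + ν = 0 and λμν ≠ 0. Then the map T(x,y) = (g(y) + h(x+y), -f(x) - h(x+y)) defined for x, y, x+y nonzero has an inverse of the same form: T⁻¹(X,Y) = (G(Y) + H(X+Y), -F(X) - H(X+Y)) where F(X) = μ/X, G(Y) = ν/Y, H(Z) = λ/Z. Concretely, if X = ν/y + λ/(x+y) and Y = -μ/x - λ/(x+y), then x = ν/Y + λ/(X+Y) and y = -μ/X - λ/(X+Y), whenever all denominators are nonzero. -/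
theorem legendre_inverse_case_A (lam mu nu x y X Y : ℝ)
    (hsum : lam + mu + nu = 0) (hprod : lam * mu * nu ≠ 0)
    (hx : x ≠ 0) (hy : y ≠ 0) (hxy : x + y ≠ 0)
    (hX : X = nu / y + lam / (x + y)) (hY : Y = -(mu / x) - lam / (x + y))
    (hX0 : X ≠ 0) (hY0 : Y ≠ 0) (hXY0 : X + Y ≠ 0) :
    x = nu / Y + lam / (X + Y) ∧ y = -(mu / X) - lam / (X + Y) := by
  have hlam : lam = -mu - nu := by linarith
  subst hlam hX hY
  field_simp at hX0 hY0 hXY0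
  have hk : x * nu - y * mu ≠ 0 := by
    intro h; apply hX0; rw [div_eq_zero_iff]; left; linear_combination h
  have hXe : nu / y + (-mu - nu) / (x + y) = (x * nu - y * mu) / (y * (x + y)) := by
    field_simp; ring
  have hYe : -(mu / x) - (-mu - nu) / (x + y) = (x * nu - y * mu) / (x * (x + y)) := by
    field_simp; ring
  rw [hXe, hYe]
  constructor
  · field_simp
    ring_nf
  · field_simp
    ring_nf
end

section
/- For the discrete equation with f(x)=μ/x, g(y)=ν/y, h(z)=λ/z, λ+μ+ν=0: the matrices A = (k-μ)I - νP(q, q₀₋₁) - λP(q, q₋₁₋₁), B = kI - μP(q, q₁₀) - λP(q, q₁₁), C = (k+ν)I - μP(q, q₋₁₀) - νP(q, q₀₁) satisfy C·B·A = k(k-μ)(k+ν)·I, where all the field values q, q₁₀, q₀₁, q₁₁, q₋₁₀, q₀₋₁, q₋₁₋₁ are pairwise distinct real numbers satisfying the lattice equation μ/(q₁₀-q) + μ/(q₋₁₀-q) + ν/(q₀₁-q) + ν/(q₀₋₁-q) + λ/(q₁₁-q) + λ/(q₋₁₋₁-q) = 0. -/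
noncomputable def P (u v : ℝ) : Matrix (Fin 2) (Fin 2) ℝ :=
  (1 / (u - v)) • !![-v, -(u*v); 1, u]

lemma P_eq (q x : ℝ) (h : q - x ≠ 0) :
    P q x = !![1 - q*(q-x)⁻¹, q - q^2*(q-x)⁻¹; (q-x)⁻¹, q*(q-x)⁻¹] := by
  unfold P
  ext i j
  fin_cases i <;> fin_cases j <;>
    simp [Matrix.smul_apply] <;> field_simp <;> ring

set_option maxHeartbeats 2000000 in
theorem CBA_scalar (k lam mu nu : ℝ) (hsum : lam + mu + nu = 0)
    (q q10 q01 q11 qm10 q0m1 qm1m1 : ℝ)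
    (hdist : [q, q10, q01, q11, qm10, q0m1, qm1m1].Pairwise (· ≠ ·))
    (hlat : mu / (q10 - q) + mu / (qm10 - q) + nu / (q01 - q) + nu / (q0m1 - q)
      + lam / (q11 - q) + lam / (qm1m1 - q) = 0)
    (A B C : Matrix (Fin 2) (Fin 2) ℝ)
    (hA : A = (k - mu) • (1 : Matrix (Fin 2) (Fin 2) ℝ) - nu • P q q0m1 - lam • P q qm1m1)
    (hB : B = k • (1 : Matrix (Fin 2) (Fin 2) ℝ) - mu • P q q10 - lam • P q q11)
    (hC : C = (k + nu) • (1 : Matrix (Fin 2) (Fin 2) ℝ) - mu • P q qm10 - nu • P q q01) :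
    C * B * A = (k * (k - mu) * (k + nu)) • (1 : Matrix (Fin 2) (Fin 2) ℝ) := by
  obtain ⟨hq, -⟩ := List.pairwise_cons.mp hdist
  have h1 : q - q10 ≠ 0 := sub_ne_zero.mpr (hq q10 (by simp))
  have h2 : q - q01 ≠ 0 := sub_ne_zero.mpr (hq q01 (by simp))
  have h3 : q - q11 ≠ 0 := sub_ne_zero.mpr (hq q11 (by simp))
  have h4 : q - q0m1 ≠ 0 := sub_ne_zero.mpr (hq q0m1 (by simp))
  have h5 : q - qm10 ≠ 0 := sub_ne_zero.mpr (hq qm10 (by simp))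
  have h6 : q - qm1m1 ≠ 0 := sub_ne_zero.mpr (hq qm1m1 (by simp))
  have e1 : (q10 - q)⁻¹ = -(q - q10)⁻¹ := by rw [show q10 - q = -(q - q10) by ring, inv_neg]
  have e2 : (q01 - q)⁻¹ = -(q - q01)⁻¹ := by rw [show q01 - q = -(q - q01) by ring, inv_neg]
  have e3 : (q11 - q)⁻¹ = -(q - q11)⁻¹ := by rw [show q11 - q = -(q - q11) by ring, inv_neg]
  have e4 : (q0m1 - q)⁻¹ = -(q - q0m1)⁻¹ := by rw [show q0m1 - q = -(q - q0m1) by ring, inv_neg]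
  have e5 : (qm10 - q)⁻¹ = -(q - qm10)⁻¹ := by rw [show qm10 - q = -(q - qm10) by ring, inv_neg]
  have e6 : (qm1m1 - q)⁻¹ = -(q - qm1m1)⁻¹ := by
    rw [show qm1m1 - q = -(q - qm1m1) by ring, inv_neg]
  have hL : mu*(q - q10)⁻¹ + nu*(q - q01)⁻¹ + lam*(q - q11)⁻¹ + nu*(q - q0m1)⁻¹
      + mu*(q - qm10)⁻¹ + lam*(q - qm1m1)⁻¹ = 0 := by
    simp only [div_eq_mul_inv, e1, e2, e3, e4, e5, e6] at hlat
    linarith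
  rw [hA, hB, hC, P_eq q q10 h1, P_eq q q01 h2, P_eq q q11 h3, P_eq q q0m1 h4,
    P_eq q qm10 h5, P_eq q qm1m1 h6]
  ext i j
  fin_cases i <;> fin_cases j <;>
    simp [Matrix.mul_apply, Fin.sum_univ_two, Matrix.one_apply]
  · linear_combination (lam*(q - q01)⁻¹*nu*q - lam*(q - q11)⁻¹*k*q - lam*(q - q11)⁻¹*nu*q + lam*(q - qm10)⁻¹*mu*q + lam*k - lam*mu - (q - q10)⁻¹*k*mu*q - (q - q10)⁻¹*mu*nu*q - 2*(q - q01)⁻¹*k*nu*q + (q - q01)⁻¹*mu*nu*q - 2*(q - qm10)⁻¹*k*mu*q + (q - qm10)⁻¹*mu*mu*q - 2*k*k + 3*k*mu - mu*mu) * hsum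
      + (k*k*q + k*nu*q) * hL
  · linear_combination (lam*(q - q01)⁻¹*nu*q*q - lam*(q - q11)⁻¹*k*q*q - lam*(q - q11)⁻¹*nu*q*q + lam*(q - qm10)⁻¹*mu*q*q + lam*k*q - lam*mu*q - (q - q10)⁻¹*k*mu*q*q - (q - q10)⁻¹*mu*nu*q*q - 2*(q - q01)⁻¹*k*nu*q*q + (q - q01)⁻¹*mu*nu*q*q - 2*(q - qm10)⁻¹*k*mu*q*q + (q - qm10)⁻¹*mu*mu*q*q - 2*k*k*q + 3*k*mu*q - mu*mu*q) * hsum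
      + (k*k*q*q + k*nu*q*q) * hL
  · linear_combination (- lam*(q - q01)⁻¹*nu + lam*(q - q11)⁻¹*k + lam*(q - q11)⁻¹*nu - lam*(q - qm10)⁻¹*mu + (q - q10)⁻¹*k*mu + (q - q10)⁻¹*mu*nu + 2*(q - q01)⁻¹*k*nu - (q - q01)⁻¹*mu*nu + 2*(q - qm10)⁻¹*k*mu - (q - qm10)⁻¹*mu*mu) * hsum
      + (- k*k - k*nu) * hL
  · linear_combination (- lam*(q - q01)⁻¹*nu*q + lam*(q - q11)⁻¹*k*q + lam*(q - q11)⁻¹*nu*q - lam*(q - qm10)⁻¹*mu*q + (q - q10)⁻¹*k*mu*q + (q - q10)⁻¹*mu*nu*q + 2*(q - q01)⁻¹*k*nu*q - (q - q01)⁻¹*mu*nu*q + 2*(q - qm10)⁻¹*k*mu*q - (q - qm10)⁻¹*mu*mu*q) * hsum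
      + (- k*k*q - k*nu*q) * hL
end

section
/- Let λ, μ, ν be reals with λμν = -1 (case I), and define f(x) = log((μeˣ+1)/(eˣ+μ)), g(y) = log((νeʸ+1)/(eʸ+ν)), h(z) = log((λe^z+1)/(e^z+λ)). Then the reciprocal-derivative functions u = 1/f', v = 1/g', w = 1/h', given explicitly by u(x) = (μeˣ+1)(eˣ+μ)/((μ²-1)eˣ), etc., satisfy the functional equation [v(y)+w(x+y)]u'(x) + [u(x)+w(x+y)]v'(y) = [u(x)+v(y)]w'(x+y) for all x, y where all expressions are defined. -/
lemma deriv_aux (m : ℝ) (hm : m ^ 2 ≠ 1) (x : ℝ) :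
    deriv (fun x => (m * Real.exp x + 1) * (Real.exp x + m) / ((m ^ 2 - 1) * Real.exp x)) x
      = m * (Real.exp x - 1 / Real.exp x) / (m ^ 2 - 1) := by
  have hm' : m ^ 2 - 1 ≠ 0 := sub_ne_zero.mpr hm
  have hfun : (fun x => (m * Real.exp x + 1) * (Real.exp x + m) / ((m ^ 2 - 1) * Real.exp x))
      = fun x => (m * Real.exp x + (m ^ 2 + 1) + m * Real.exp (-x)) / (m ^ 2 - 1) := by
    funext t
    have h := Real.exp_ne_zero t
    rw [Real.exp_neg]
    field_simp
    ring
  rw [hfun]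
  have h1 : HasDerivAt (fun x : ℝ => Real.exp (-x)) (-Real.exp (-x)) x := by
    have := (hasDerivAt_neg x).exp; simpa using this
  have h2 := ((((Real.hasDerivAt_exp x).const_mul m).add_const (m ^ 2 + 1)).add
      (h1.const_mul m)).div_const (m ^ 2 - 1)
  have h3 : HasDerivAt (fun x => (m * Real.exp x + (m ^ 2 + 1) + m * Real.exp (-x)) / (m ^ 2 - 1))
      (m * (Real.exp x - 1 / Real.exp x) / (m ^ 2 - 1)) x := by
    refine h2.congr_deriv ?_
    rw [Real.exp_neg]
    ring
  exact h3.deriv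

set_option maxHeartbeats 1000000 in
lemma alg_aux (mu nu a b : ℝ)
    (hmu' : mu ^ 2 - 1 ≠ 0) (hnu' : nu ^ 2 - 1 ≠ 0)
    (hk : (mu * nu) ^ 2 - 1 ≠ 0) (ha : a ≠ 0) (hb : b ≠ 0) :
    ((nu * b + 1) * (b + nu) / ((nu ^ 2 - 1) * b)
        + (a * b - mu * nu) * (mu * nu * (a * b) - 1) / (((mu * nu) ^ 2 - 1) * (a * b)))
        * (mu * (a - 1 / a) / (mu ^ 2 - 1))
      + ((mu * a + 1) * (a + mu) / ((mu ^ 2 - 1) * a)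
        + (a * b - mu * nu) * (mu * nu * (a * b) - 1) / (((mu * nu) ^ 2 - 1) * (a * b)))
        * (nu * (b - 1 / b) / (nu ^ 2 - 1))
      = ((mu * a + 1) * (a + mu) / ((mu ^ 2 - 1) * a)
        + (nu * b + 1) * (b + nu) / ((nu ^ 2 - 1) * b))
        * (mu * nu * (a * b - 1 / (a * b)) / ((mu * nu) ^ 2 - 1)) := by
  generalize hK : (mu * nu) ^ 2 - 1 = K at hk ⊢
  field_simp
  subst hK
  ring

theorem functional_eq_case_I (lam mu nu : ℝ)
    (hprod : lam * mu * nu = -1)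
    (hmu : mu ^ 2 ≠ 1) (hnu : nu ^ 2 ≠ 1) (hlam : lam ^ 2 ≠ 1)
    (u v w : ℝ → ℝ)
    (hu : u = fun x => (mu * Real.exp x + 1) * (Real.exp x + mu) / ((mu ^ 2 - 1) * Real.exp x))
    (hv : v = fun y => (nu * Real.exp y + 1) * (Real.exp y + nu) / ((nu ^ 2 - 1) * Real.exp y))
    (hw : w = fun s => (lam * Real.exp s + 1) * (Real.exp s + lam) / ((lam ^ 2 - 1) * Real.exp s)) :
    ∀ x y : ℝ,
      (v y + w (x + y)) * deriv u x + (u x + w (x + y)) * deriv v y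
        = (u x + v y) * deriv w (x + y) := by
  intro x y
  subst hu hv hw
  rw [deriv_aux mu hmu, deriv_aux nu hnu, deriv_aux lam hlam]
  have hmu' : mu ^ 2 - 1 ≠ 0 := sub_ne_zero.mpr hmu
  have hnu' : nu ^ 2 - 1 ≠ 0 := sub_ne_zero.mpr hnu
  have hlam' : lam ^ 2 - 1 ≠ 0 := sub_ne_zero.mpr hlam
  have hlam0 : lam ≠ 0 := by rintro rfl; simp at hprod
  have hmn : mu * nu = -1 / lam := by
    field_simp
    linear_combination hprod
  have hk : (mu * nu) ^ 2 - 1 ≠ 0 := by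
    rw [hmn]
    have : (-1 / lam) ^ 2 - 1 = (1 - lam ^ 2) / lam ^ 2 := by field_simp
    rw [this]
    intro h
    apply hlam'
    have h2 : 1 - lam ^ 2 = 0 := by
      have := div_eq_zero_iff.mp h
      rcases this with h' | h'
      · exact h'
      · exact absurd h' (pow_ne_zero 2 hlam0)
    linarith
  have hc : Real.exp (x + y) ≠ 0 := Real.exp_ne_zero _
  have hE : Real.exp (x + y) = Real.exp x * Real.exp y := Real.exp_add x y
  have hc' : Real.exp x * Real.exp y ≠ 0 := by rw [← hE]; exact hc
  have hw1 : (lam * Real.exp (x + y) + 1) * (Real.exp (x + y) + lam)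
        / ((lam ^ 2 - 1) * Real.exp (x + y))
      = (Real.exp x * Real.exp y - mu * nu) * (mu * nu * (Real.exp x * Real.exp y) - 1)
        / (((mu * nu) ^ 2 - 1) * (Real.exp x * Real.exp y)) := by
    rw [hE]
    rw [div_eq_div_iff (mul_ne_zero hlam' hc') (mul_ne_zero hk hc')]
    linear_combination (Real.exp x * Real.exp y *
      ((mu * nu - lam) * ((Real.exp x * Real.exp y) ^ 2 + 1)
        + 2 * (lam * mu * nu - 1) * (Real.exp x * Real.exp y))) * hprod
  have hw2 : lam * (Real.exp (x + y) - 1 / Real.exp (x + y)) / (lam ^ 2 - 1)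
      = mu * nu * (Real.exp x * Real.exp y - 1 / (Real.exp x * Real.exp y))
        / ((mu * nu) ^ 2 - 1) := by
    rw [hE]
    rw [div_eq_div_iff hlam' hk]
    linear_combination ((Real.exp x * Real.exp y - 1 / (Real.exp x * Real.exp y))
      * (mu * nu - lam)) * hprod
  beta_reduce
  rw [hw1, hw2]
  exact alg_aux mu nu (Real.exp x) (Real.exp y) hmu' hnu' hk
    (Real.exp_ne_zero x) (Real.exp_ne_zero y)
end
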